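/- Let $A, B, C > 0$ with $a = -1$, and for $B' \geq B$ let $x_1(B') \in (-1, 0)$ denote the unique zero in $(-1,0)$ of $f_{B'}(x) = A/(x + 1) + B'/x - C/(1 - x)$. Then $x_1$ is a strictly decreasing function of $B'$, and the unique zero $x_2(B') \in (0,1)$ is a strictly increasing function of $B'$ when $A = C$. -/

import Mathlib

open Set

/-- The function `A/(x+1) + B'/x - C/(1-x)` is strictly decreasing on each of the
intervals `(-1,0)` and `(0,1)` (captured by the hypothesis `0 < x*y`). -/
lemma f_strict_anti (A B' C : ℝ) (hA : 0 < A) (hB' : 0 < B') (hC : 0 < C)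
    {x y : ℝ} (hx : -1 < x) (hy : y < 1) (hxy : x < y) (hsgn : 0 < x * y) :
    A / (y + 1) + B' / y - C / (1 - y) < A / (x + 1) + B' / x - C / (1 - x) := by
  have h1 : A / (y + 1) < A / (x + 1) :=
    div_lt_div_of_pos_left hA (by linarith) (by linarith)
  have h3 : C / (1 - x) < C / (1 - y) :=
    div_lt_div_of_pos_left hC (by linarith) (by linarith)
  have hxne : x ≠ 0 := by rintro rfl; simp at hsgn
  have hyne : y ≠ 0 := by rintro rfl; simp at hsgn
  have key : B' / x - B' / y = B' * (y - x) / (x * y) := by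
    field_simp
  have hpos : 0 < B' * (y - x) / (x * y) :=
    div_pos (by nlinarith) hsgn
  have h2 : B' / y < B' / x := by linarith [key ▸ hpos]
  linarith

/-- For `a = -1`, the negative zero of `A/(x+1) + B'/x - C/(1-x)` is strictly
decreasing in `B'`, and when `A = C` the positive zero is strictly increasing in `B'`. -/
theorem jacobi_angelesco_base_monotone_beta
    (A B C δ : ℝ) (hA : 0 < A) (hB : 0 < B) (hC : 0 < C) (hδ : 0 < δ)
    (x₁ x₁' x₂ x₂' : ℝ)
    (hx₁ : x₁ ∈ Set.Ioo (-1 : ℝ) 0) (hfx₁ : A / (x₁ + 1) + B / x₁ - C / (1 - x₁) = 0)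
    (hx₁' : x₁' ∈ Set.Ioo (-1 : ℝ) 0)
    (hfx₁' : A / (x₁' + 1) + (B + δ) / x₁' - C / (1 - x₁') = 0)
    (hx₂ : x₂ ∈ Set.Ioo (0 : ℝ) 1) (hfx₂ : A / (x₂ + 1) + B / x₂ - C / (1 - x₂) = 0)
    (hx₂' : x₂' ∈ Set.Ioo (0 : ℝ) 1)
    (hfx₂' : A / (x₂' + 1) + (B + δ) / x₂' - C / (1 - x₂') = 0) :
    x₁' < x₁ ∧ (A = C → x₂ < x₂') := by
  obtain ⟨hx₁l, hx₁r⟩ := hx₁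
  obtain ⟨hx₁'l, hx₁'r⟩ := hx₁'
  obtain ⟨hx₂l, hx₂r⟩ := hx₂
  obtain ⟨hx₂'l, hx₂'r⟩ := hx₂'
  have hBδ : 0 < B + δ := by linarith
  -- value of the shifted function at x₁ and x₂
  have hv₁ : A / (x₁ + 1) + (B + δ) / x₁ - C / (1 - x₁) = δ / x₁ := by
    rw [add_div]; linarith
  have hv₂ : A / (x₂ + 1) + (B + δ) / x₂ - C / (1 - x₂) = δ / x₂ := by
    rw [add_div]; linarith
  have hδx₁ : δ / x₁ < 0 := div_neg_of_pos_of_neg hδ hx₁r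
  have hδx₂ : 0 < δ / x₂ := div_pos hδ hx₂l
  constructor
  · by_contra h
    push_neg at h
    rcases eq_or_lt_of_le h with heq | hlt
    · rw [← heq] at hfx₁'
      rw [hfx₁'] at hv₁
      linarith
    · have := f_strict_anti A (B + δ) C hA hBδ hC hx₁l (by linarith : x₁' < 1) hlt
        (mul_pos_of_neg_of_neg hx₁r hx₁'r)
      rw [hfx₁', hv₁] at this
      linarith
  · intro _
    by_contra h
    push_neg at h
    rcases eq_or_lt_of_le h with heq | hlt
    · rw [heq] at hfx₂'
      rw [hfx₂'] at hv₂
      linarith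
    · have := f_strict_anti A (B + δ) C hA hBδ hC (by linarith : (-1:ℝ) < x₂') hx₂r hlt
        (mul_pos hx₂'l hx₂l)
      rw [hfx₂', hv₂] at this
      linarith
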